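/- arXiv:2204.10136 — 9 statements merged into one kernel-verified Lean document; each statement's English description precedes it below -/
import Mathlib

section
/- For all natural numbers n, the sequence defined by a_0 = 0 and a_n = (n/2)·a_{n-1} + (n-1)! for n ≥ 1 satisfies a_n = (n!/2^n) · ∑_{k=1}^{n} 2^k/k. -/
/-- The rational sequence `a₀ = 0`, `aₙ = (n/2)·aₙ₋₁ + (n-1)!`. -/
noncomputable def a : ℕ → ℚ
  | 0 => 0
  | n + 1 => ((n + 1 : ℕ) : ℚ) / 2 * a n + (Nat.factorial n : ℚ)

open Finset in
theorem stmt_0 (n : ℕ) :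
    a n = ((Nat.factorial n : ℚ) / 2 ^ n) * ∑ k ∈ Finset.Icc 1 n, (2 ^ k / (k : ℚ)) := by
  induction n with
  | zero => simp [a]
  | succ n ih =>
    rw [show n + 1 = n + 1 from rfl, a, ih,
      Finset.sum_Icc_succ_top (by omega : 1 ≤ n + 1)]
    have hn1 : ((n : ℚ) + 1) ≠ 0 := by positivity
    have h2 : (2 : ℚ) ^ n ≠ 0 := by positivity
    rw [Nat.factorial_succ]
    push_cast
    field_simp
    ring
end

section
/- For every natural number n, a_n = (-1)^{n-1} · ∑_{k=0}^{n} G_k · s(n,k), where G_k are the Genocchi numbers and s(n,k) are the Stirling numbers of the first kind. -/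
/-- Genocchi numbers, defined by the EGF `2x/(eˣ+1) = ∑ Gₙ xⁿ/n!`. -/
noncomputable def genocchi (n : ℕ) : ℚ :=
  (Nat.factorial n : ℚ) *
    PowerSeries.coeff (R := ℚ) n (2 * PowerSeries.X * (PowerSeries.exp ℚ + 1)⁻¹)

open Finset Polynomial in
/-- Signed Stirling numbers of the first kind: `s n k` is the coefficient of `X^k`
in `X(X-1)⋯(X-n+1)`. -/
noncomputable def stirlingFst (n k : ℕ) : ℤ :=
  (∏ i ∈ Finset.range n, (Polynomial.X - Polynomial.C (i : ℤ))).coeff k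

open Finset Polynomial PowerSeries

lemma const_exp1 : PowerSeries.constantCoeff (R := ℚ) (PowerSeries.exp ℚ + 1) = 2 := by
  simp [PowerSeries.constantCoeff_exp]; norm_num

lemma hFmul : (2 * PowerSeries.X * (PowerSeries.exp ℚ + 1)⁻¹) * (PowerSeries.exp ℚ + 1)
    = 2 * PowerSeries.X := by
  rw [mul_assoc, PowerSeries.inv_mul_cancel _ (by rw [const_exp1]; norm_num), mul_one]

lemma genocchi_conv (k : ℕ) :
    (∑ j ∈ range (k + 1), (k.choose j : ℚ) * genocchi j) + genocchi k
      = if k = 1 then 2 else 0 := by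
  have h := congrArg (fun φ => (k.factorial : ℚ) * PowerSeries.coeff (R := ℚ) k φ)
    (by have := hFmul; rwa [mul_add, mul_one] at this :
      (2 * PowerSeries.X * (PowerSeries.exp ℚ + 1)⁻¹) * PowerSeries.exp ℚ
        + (2 * PowerSeries.X * (PowerSeries.exp ℚ + 1)⁻¹) = 2 * PowerSeries.X)
  simp only [map_add, mul_add] at h
  set F := 2 * PowerSeries.X * (PowerSeries.exp ℚ + 1)⁻¹ with hF
  have h1 : (k.factorial : ℚ) * PowerSeries.coeff (R := ℚ) k (F * PowerSeries.exp ℚ)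
      = ∑ j ∈ range (k + 1), (k.choose j : ℚ) * genocchi j := by
    rw [PowerSeries.coeff_mul, Finset.Nat.sum_antidiagonal_eq_sum_range_succ_mk,
      Finset.mul_sum]
    refine Finset.sum_congr rfl fun j hj => ?_
    have hjk : j ≤ k := Nat.lt_succ_iff.mp (Finset.mem_range.mp hj)
    rw [PowerSeries.coeff_exp, Nat.cast_choose ℚ hjk]
    have hj0 : (j.factorial : ℚ) ≠ 0 := Nat.cast_ne_zero.mpr j.factorial_ne_zero
    have hkj0 : ((k - j).factorial : ℚ) ≠ 0 := Nat.cast_ne_zero.mpr (k - j).factorial_ne_zero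
    simp only [genocchi, ← hF, eq_ratCast, Rat.cast_div, Rat.cast_one, Rat.cast_natCast]
    field_simp
  have h2 : (k.factorial : ℚ) * PowerSeries.coeff (R := ℚ) k (2 * PowerSeries.X)
      = if k = 1 then 2 else 0 := by
    have h2X : (2 : ℚ⟦X⟧) = PowerSeries.C (R := ℚ) 2 := (map_ofNat (PowerSeries.C (R := ℚ)) 2).symm
    rw [h2X, PowerSeries.coeff_C_mul, PowerSeries.coeff_X]
    split_ifs with hk
    · subst hk; norm_num [Nat.factorial]
    · simp
  rw [h1, show (k.factorial : ℚ) * PowerSeries.coeff (R := ℚ) k F = genocchi k from rfl, h2] at h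
  exact h

noncomputable def phi (p : Polynomial ℚ) : ℚ := p.sum fun k c => c * genocchi k

lemma phi_zero : phi 0 = 0 := Polynomial.sum_zero_index _

lemma phi_add (p q : Polynomial ℚ) : phi (p + q) = phi p + phi q :=
  Polynomial.sum_add_index p q _ (fun _ => zero_mul _) (fun _ b c => add_mul b c _)

lemma phi_monomial (n : ℕ) (c : ℚ) : phi (Polynomial.monomial n c) = c * genocchi n :=
  Polynomial.sum_monomial_index c _ (zero_mul _)

lemma phi_C_mul (c : ℚ) (p : Polynomial ℚ) : phi (Polynomial.C c * p) = c * phi p := by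
  rw [show Polynomial.C c * p = c • p from by rw [Polynomial.smul_eq_C_mul], phi,
    Polynomial.sum_smul_index p c (fun k x => x * genocchi k) (fun k => zero_mul (genocchi k))]
  simp only [phi, Polynomial.sum_def, Finset.mul_sum, mul_assoc]

lemma phi_eq_range (p : Polynomial ℚ) {n : ℕ} (h : p.natDegree < n) :
    phi p = ∑ k ∈ Finset.range n, p.coeff k * genocchi k :=
  Polynomial.sum_over_range' p (f := fun k c => c * genocchi k)
    (fun k => zero_mul (genocchi k)) n h

lemma genocchi_zero : genocchi 0 = 0 := by
  rw [genocchi, PowerSeries.coeff_zero_eq_constantCoeff_apply]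
  simp

lemma genocchi_one : genocchi 1 = 1 := by
  have h2X : (2 : PowerSeries ℚ) * PowerSeries.X * (PowerSeries.exp ℚ + 1)⁻¹
      = PowerSeries.X * (PowerSeries.C (R := ℚ) 2 * (PowerSeries.exp ℚ + 1)⁻¹) := by
    rw [show (2 : PowerSeries ℚ) = PowerSeries.C (R := ℚ) 2 from (map_ofNat _ 2).symm]; ring
  rw [genocchi, h2X, show (1:ℕ) = 0 + 1 from rfl, PowerSeries.coeff_succ_X_mul]
  rw [PowerSeries.coeff_zero_eq_constantCoeff_apply]
  rw [map_mul, PowerSeries.constantCoeff_C, PowerSeries.constantCoeff_inv, const_exp1]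
  norm_num

lemma umbral (p : Polynomial ℚ) :
    phi (p.comp (Polynomial.X + 1)) + phi p = 2 * p.coeff 1 := by
  induction p using Polynomial.induction_on' with
  | add p q hp hq =>
    rw [Polynomial.add_comp, phi_add, phi_add, Polynomial.coeff_add]
    linarith
  | monomial n c =>
    rw [Polynomial.monomial_comp, phi_C_mul, phi_monomial, Polynomial.coeff_monomial]
    have hdeg : (Polynomial.X + 1 : Polynomial ℚ).natDegree = 1 := by
      simpa using Polynomial.natDegree_X_add_C (1 : ℚ)
    have hd : ((Polynomial.X + 1 : Polynomial ℚ) ^ n).natDegree < n + 1 := by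
      calc ((Polynomial.X + 1 : Polynomial ℚ) ^ n).natDegree ≤ n * 1 := by
            simpa [hdeg] using Polynomial.natDegree_pow_le (p := (Polynomial.X + 1 : Polynomial ℚ)) (n := n)
        _ < n + 1 := by omega
    rw [phi_eq_range _ hd]
    simp only [Polynomial.coeff_X_add_one_pow]
    rw [← mul_add c, genocchi_conv n]
    by_cases h : n = 1
    · subst h; norm_num [mul_comm]
    · simp [h]

noncomputable def fQ (n : ℕ) : Polynomial ℚ :=
  ∏ i ∈ Finset.range n, (Polynomial.X - Polynomial.C (i : ℚ))

lemma fQ_succ (n : ℕ) : fQ (n + 1) = fQ n * (Polynomial.X - Polynomial.C (n : ℚ)) := by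
  rw [fQ, fQ, Finset.prod_range_succ]

lemma natDegree_fQ (n : ℕ) : (fQ n).natDegree = n := by
  rw [fQ, Polynomial.natDegree_prod_of_monic _ _ (fun i _ => Polynomial.monic_X_sub_C _)]
  simp only [Polynomial.natDegree_X_sub_C, Finset.sum_const, Finset.card_range, smul_eq_mul,
    mul_one]

lemma coeff_fQ (n k : ℕ) : (fQ n).coeff k = (stirlingFst n k : ℚ) := by
  have hmap : fQ n
      = ((∏ i ∈ Finset.range n, (Polynomial.X - Polynomial.C (i : ℤ))).map
          (Int.castRingHom ℚ)) := by
    rw [Polynomial.map_prod, fQ]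
    refine Finset.prod_congr rfl fun i _ => ?_
    simp
  rw [hmap, Polynomial.coeff_map, stirlingFst]
  simp

lemma fQ_comp (n : ℕ) : (fQ (n + 1)).comp (Polynomial.X + 1) = (Polynomial.X + 1) * fQ n := by
  rw [fQ, fQ, Polynomial.prod_comp, Finset.prod_range_succ']
  have h0 : (Polynomial.X - Polynomial.C ((0 : ℕ) : ℚ)).comp (Polynomial.X + 1)
      = Polynomial.X + 1 := by simp
  rw [h0, mul_comm]
  congr 1
  refine Finset.prod_congr rfl fun i _ => ?_
  rw [Polynomial.sub_comp, Polynomial.X_comp, Polynomial.C_comp, Nat.cast_add, Nat.cast_one,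
    map_add, map_one]
  ring

lemma coeff_zero_fQ (n : ℕ) : (fQ (n + 1)).coeff 0 = 0 := by
  rw [Polynomial.coeff_zero_eq_eval_zero, fQ, Polynomial.eval_prod]
  refine Finset.prod_eq_zero (Finset.mem_range.mpr (Nat.succ_pos n)) ?_
  simp

noncomputable def S (n : ℕ) : ℚ := phi (fQ n)

lemma S_rec (m : ℕ) :
    2 * S (m + 2) + (3 * (m : ℚ) + 4) * S (m + 1) + ((m : ℚ) + 1) ^ 2 * S m = 0 := by
  have hu := umbral (Polynomial.X * fQ (m + 1))
  rw [Polynomial.coeff_X_mul, coeff_zero_fQ, mul_zero] at hu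
  have hcomp : (Polynomial.X * fQ (m + 1)).comp (Polynomial.X + 1)
      = (Polynomial.X + 1) * ((Polynomial.X + 1) * fQ m) := by
    rw [Polynomial.mul_comp, Polynomial.X_comp, fQ_comp]
  rw [hcomp] at hu
  have hpoly : (Polynomial.X + 1) * ((Polynomial.X + 1) * fQ m) + Polynomial.X * fQ (m + 1)
      = Polynomial.C (2 : ℚ) * fQ (m + 2) + Polynomial.C (3 * (m : ℚ) + 4) * fQ (m + 1)
        + Polynomial.C (((m : ℚ) + 1) ^ 2) * fQ m := by
    rw [fQ_succ (m + 1), fQ_succ m]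
    push_cast
    simp only [map_add, map_mul, map_one, map_pow, map_ofNat, Polynomial.C_1]
    ring
  have := phi_add ((Polynomial.X + 1) * ((Polynomial.X + 1) * fQ m)) (Polynomial.X * fQ (m + 1))
  rw [hpoly, phi_add, phi_add, phi_C_mul, phi_C_mul, phi_C_mul] at this
  rw [← this] at hu
  calc 2 * S (m + 2) + (3 * (m : ℚ) + 4) * S (m + 1) + ((m : ℚ) + 1) ^ 2 * S m
      = 2 * phi (fQ (m + 2)) + (3 * (m : ℚ) + 4) * phi (fQ (m + 1))
        + ((m : ℚ) + 1) ^ 2 * phi (fQ m) := rfl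
    _ = 0 := hu

lemma S_eq (n : ℕ) : S n = (-1 : ℚ) ^ (n + 1) * a n := by
  have key : ∀ n : ℕ, S n = (-1 : ℚ) ^ (n + 1) * a n
      ∧ S (n + 1) = (-1 : ℚ) ^ (n + 2) * a (n + 1) := by
    intro n
    induction n with
    | zero =>
      constructor
      · have h0 : S 0 = genocchi 0 := by
          rw [S, show fQ 0 = Polynomial.monomial 0 (1 : ℚ) from by
            simp [fQ, Polynomial.monomial_zero_one], phi_monomial, one_mul]
        rw [h0, genocchi_zero, show a 0 = 0 from rfl]; ring
      · have h1 : S 1 = genocchi 1 := by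
          rw [S, show fQ 1 = Polynomial.monomial 1 (1 : ℚ) from by
            simp [fQ, Polynomial.X], phi_monomial, one_mul]
        rw [h1, genocchi_one, show a 1 = ((1 : ℕ) : ℚ) / 2 * a 0 + (Nat.factorial 0 : ℚ) from rfl,
          show a 0 = 0 from rfl]
        norm_num [Nat.factorial]
    | succ m ih =>
      refine ⟨ih.2, ?_⟩
      have hr := S_rec m
      have h1 := ih.2
      have h0 := ih.1
      rw [h1, h0] at hr
      have ha2 : a (m + 2) = ((m + 2 : ℕ) : ℚ) / 2 * a (m + 1) + (Nat.factorial (m + 1) : ℚ) := rfl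
      have ha1 : a (m + 1) = ((m + 1 : ℕ) : ℚ) / 2 * a m + (Nat.factorial m : ℚ) := rfl
      have hfac : (Nat.factorial (m + 1) : ℚ) = ((m : ℚ) + 1) * (Nat.factorial m : ℚ) := by
        rw [Nat.factorial_succ]; push_cast; ring
      push_cast at ha2 ha1
      linear_combination (1 / 2 : ℚ) * hr + (-1 : ℚ) ^ (m + 2) * ha2
        + (-((-1 : ℚ) ^ (m + 2)) * ((m : ℚ) + 1)) * ha1 + (-1 : ℚ) ^ (m + 2) * hfac
  exact (key n).1

open Finset in
theorem stmt_1 (n : ℕ) :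
    a n = (-1 : ℚ) ^ (n - 1) * ∑ k ∈ Finset.range (n + 1), genocchi k * (stirlingFst n k : ℚ) := by
  have hT : ∑ k ∈ Finset.range (n + 1), genocchi k * (stirlingFst n k : ℚ) = S n := by
    rw [S, phi_eq_range (fQ n) (n := n + 1) (by rw [natDegree_fQ]; omega)]
    exact Finset.sum_congr rfl fun k _ => by rw [coeff_fQ, mul_comm]
  rw [hT, S_eq]
  cases n with
  | zero => show a 0 = _; rw [show a 0 = 0 from rfl]; ring
  | succ m =>
    rw [show m + 1 - 1 = m from rfl, ← mul_assoc, ← pow_add,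
      show m + (m + 1 + 1) = 2 * (m + 1) from by ring, pow_mul]
    norm_num
end

section
/- Every term of the sequence (a_n) defined by a_0 = 0 and a_n = (n/2)·a_{n-1} + (n-1)! is an integer. -/
noncomputable def g (m i : ℕ) : ℚ := (-1)^i * (Nat.choose i (m - i) : ℚ) * 4^i

noncomputable def F (m : ℕ) : ℚ := ∑ i ∈ Finset.range (m+1), g m i

lemma g_succ (k i : ℕ) (h : i ≤ k) :
    g (k+2) (i+1) = -4 * (g k i + g (k+1) i) := by
  unfold g
  have h1 : k + 2 - (i+1) = (k - i) + 1 := by omega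
  have h2 : k + 1 - i = (k - i) + 1 := by omega
  rw [h1, h2, Nat.choose_succ_succ]
  push_cast
  ring

lemma F_split (k : ℕ) :
    F (k+2) = (∑ i ∈ Finset.range (k+1), g (k+2) (i+1)) + g (k+2) 0 + g (k+2) (k+2) := by
  rw [F, Finset.sum_range_succ, Finset.sum_range_succ']

lemma F_eq (m : ℕ) : F m = (m+1) * (-2)^m := by
  induction m using Nat.twoStepInduction with
  | zero => simp [F, g]
  | one =>
      rw [F, Finset.sum_range_succ, Finset.sum_range_succ]
      simp [g]
      norm_num
  | more k ih1 ih2 =>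
      have hg0 : g (k+2) 0 = 0 := by simp [g, Nat.choose_eq_zero_of_lt]
      have hgtop : g (k+2) (k+2) = (-1)^(k+2) * 4^(k+2) := by simp [g]
      have hgtop1 : g (k+1) (k+1) = (-1)^(k+1) * 4^(k+1) := by simp [g]
      have e2 : (∑ i ∈ Finset.range (k+1), g (k+2) (i+1))
          = -4 * ((∑ i ∈ Finset.range (k+1), g k i) + (∑ i ∈ Finset.range (k+1), g (k+1) i)) := by
        rw [← Finset.sum_add_distrib, Finset.mul_sum]
        exact Finset.sum_congr rfl fun i hi =>
          g_succ k i (Nat.lt_succ_iff.mp (Finset.mem_range.mp hi))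
      have e3' : F (k+1) = (∑ i ∈ Finset.range (k+1), g (k+1) i) + g (k+1) (k+1) := by
        rw [F, Finset.sum_range_succ]
      have e3 : (∑ i ∈ Finset.range (k+1), g (k+1) i) = F (k+1) - g (k+1) (k+1) := by
        rw [e3']; ring
      have e4 : (∑ i ∈ Finset.range (k+1), g k i) = F k := rfl
      rw [F_split, e2, e3, e4, hg0, hgtop, hgtop1, ih1, ih2]
      push_cast
      ring

lemma KI (p : ℕ) :
    ∑ i ∈ Finset.range (p+1),
      (-1:ℚ)^(p+1+i) * ((Nat.choose (i+1) (p+1-i) : ℚ) + (Nat.choose i (p-i) : ℚ)) * 4^(i+1)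
      = 2^(p+3) - 2^(2*p+4) := by
  have per : ∀ i ∈ Finset.range (p+1),
      (-1:ℚ)^(p+1+i) * ((Nat.choose (i+1) (p+1-i) : ℚ) + (Nat.choose i (p-i) : ℚ)) * 4^(i+1)
        = (-1)^p * g (p+2) (i+1) + ((-1)^(p+1)*4) * g p i := by
    intro i hi
    unfold g
    have h1 : p + 2 - (i+1) = p + 1 - i := by omega
    rw [h1]
    push_cast
    ring
  rw [Finset.sum_congr rfl per, Finset.sum_add_distrib, ← Finset.mul_sum, ← Finset.mul_sum]
  have s1 : (∑ i ∈ Finset.range (p+1), g (p+2) (i+1)) = F (p+2) - g (p+2) 0 - g (p+2) (p+2) := by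
    rw [F_split]; ring
  have s2 : (∑ i ∈ Finset.range (p+1), g p i) = F p := rfl
  have hg0 : g (p+2) 0 = 0 := by simp [g, Nat.choose_eq_zero_of_lt]
  have hgtop : g (p+2) (p+2) = (-1)^(p+2) * 4^(p+2) := by simp [g]
  rw [s1, s2, hg0, hgtop, F_eq, F_eq]
  push_cast
  have a1 : (-2:ℚ)^p * (-1)^p = 2^p := by rw [← mul_pow]; norm_num
  have a2 : ((-1:ℚ))^(p*2) = 1 := by rw [pow_mul']; norm_num
  have a3 : (4:ℚ)^p = 2^(p*2) := by rw [pow_mul']; norm_num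
  ring_nf
  rw [a2, a3]
  linear_combination (8:ℚ) * a1


lemma per_term (i d : ℕ) : (-1:ℚ)^((i+1+d)+1+i+1) * (Nat.choose i (d+1) : ℚ) * (((i+1+d)+1).factorial : ℚ) * 4^(i+1) / ((((i:ℕ)+1 : ℕ):ℚ) * 2^((i+1+d)+2))
      - (((i+1+d)+1:ℕ):ℚ)/2 * ((-1:ℚ)^((i+1+d)+i+1) * (Nat.choose i d : ℚ) * ((i+1+d).factorial : ℚ) * 4^(i+1) / ((((i:ℕ)+1:ℕ):ℚ) * 2^((i+1+d)+1)))
      = ((i+1+d).factorial : ℚ) / 2^((i+1+d)+2) * ((-1:ℚ)^((i+1+d)+i) * ((Nat.choose (i+1) (d+1) : ℚ) + (Nat.choose i d : ℚ)) * 4^(i+1)) := by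
  have key : ((i:ℚ)+1) * (Nat.choose i d : ℚ) = (Nat.choose (i+1) (d+1) : ℚ) * ((d:ℚ)+1) := by
    exact_mod_cast congrArg (Nat.cast (R := ℚ)) (Nat.add_one_mul_choose_eq i d)
  have pascal : (Nat.choose (i+1) (d+1) : ℚ) = (Nat.choose i d : ℚ) + (Nat.choose i (d+1) : ℚ) := by
    exact_mod_cast congrArg (Nat.cast (R := ℚ)) (Nat.choose_succ_succ i d)
  have hfac : (((i+1+d)+1).factorial : ℚ) = (((i:ℚ)+1+d)+1) * ((i+1+d).factorial : ℚ) := by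
    rw [Nat.factorial_succ]; push_cast; ring
  have h0 : ((i:ℚ)+1) ≠ 0 := by positivity
  have h2 : (2:ℚ) ≠ 0 := by norm_num
  rw [hfac]
  push_cast
  have CL : ((i:ℚ)+(d:ℚ)+2) * ((Nat.choose i d : ℚ) + (Nat.choose i (d+1):ℚ))
      = ((i:ℚ)+1) * ((Nat.choose (i+1) (d+1):ℚ) + (Nat.choose i d:ℚ)) := by
    linear_combination (-1:ℚ) * key - ((i:ℚ)+(d:ℚ)+2) * pascal
  field_simp
  linear_combination ((-1:ℚ)^(i+1+d+i) * 2 * 2^(i+1+d+1)) * CL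

lemma per_term' (p i : ℕ) (hip : i ≤ p) :
    (-1:ℚ)^((p+2)+i+1) * (Nat.choose i ((p+2)-1-i) : ℚ) * ((p+2).factorial : ℚ) * 4^(i+1) / (((i:ℚ)+1) * 2^((p+2)+1))
      - ((p+2:ℕ):ℚ)/2 * ((-1:ℚ)^((p+1)+i+1) * (Nat.choose i ((p+1)-1-i) : ℚ) * ((p+1).factorial : ℚ) * 4^(i+1) / (((i:ℚ)+1) * 2^(p+2)))
      = ((p+1).factorial : ℚ) / 2^(p+3) * ((-1:ℚ)^(p+1+i) * ((Nat.choose (i+1) (p+1-i) : ℚ) + (Nat.choose i (p-i) : ℚ)) * 4^(i+1)) := by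
  obtain ⟨d, rfl⟩ : ∃ d, p = i + d := ⟨p - i, by omega⟩
  have h := per_term i d
  simp only [show i+d+2-1-i = d+1 from by omega, show i+d+1-1-i = d from by omega,
             show i+d+1-i = d+1 from by omega, show i+d-i = d from by omega,
             show i+1+d+1-1-i = d+1 from by omega, show i+1+d-1-i = d from by omega,
             show i+1+d-i = d+1 from by omega, show i+1+d+1-i = d+2 from by omega,
             show i+d+3 = i+1+d+2 from by omega, show i+d+2 = i+1+d+1 from by omega,
             show i+d+1 = i+1+d from by omega]
  push_cast at h ⊢
  linear_combination h

lemma a_eq (n : ℕ) : a n = ∑ i ∈ Finset.range n,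
    (-1:ℚ)^(n+i+1) * (Nat.choose i (n-1-i) : ℚ) * (n.factorial : ℚ) * 4^(i+1) / (((i:ℚ)+1) * 2^(n+1)) := by
  induction n with
  | zero => simp [a]
  | succ n ih =>
    rcases n with _ | p
    · have h1 : a 1 = ((0+1:ℕ):ℚ)/2 * a 0 + ((0:ℕ).factorial : ℚ) := rfl
      rw [h1]
      simp [a, Finset.sum_range_succ]
      norm_num
    · have hrec : a (p+1+1) = ((p+1+1:ℕ):ℚ)/2 * a (p+1) + ((p+1).factorial : ℚ) := rfl
      rw [hrec, ih]
      simp only [show p+1+1 = p+2 from by omega]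
      conv_rhs => rw [show (p+2) = (p+1)+1 from rfl, Finset.sum_range_succ]
      simp only [show p+1+1 = p+2 from by omega]
      have hz : ((p+1:ℕ):ℚ)+1 ≠ 0 := by positivity
      have key : ∑ i ∈ Finset.range (p+1),
          ((-1:ℚ)^((p+2)+i+1) * (Nat.choose i ((p+2)-1-i) : ℚ) * ((p+2).factorial : ℚ) * 4^(i+1) / (((i:ℚ)+1) * 2^((p+2)+1))
            - ((p+2:ℕ):ℚ)/2 * ((-1:ℚ)^((p+1)+i+1) * (Nat.choose i ((p+1)-1-i) : ℚ) * ((p+1).factorial : ℚ) * 4^(i+1) / (((i:ℚ)+1) * 2^(p+2))))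
          = ((p+1).factorial:ℚ) - ((p+1).factorial:ℚ) * 2^(p+1) := by
        rw [Finset.sum_congr rfl (fun i hi => per_term' p i (by
          have := Finset.mem_range.mp hi; omega))]
        rw [← Finset.mul_sum, KI p]
        have h1 : (2:ℚ)^(2*p+4) = 2^(p+3) * 2^(p+1) := by rw [← pow_add]; congr 1; omega
        rw [h1]
        field_simp
      have htop : (-1:ℚ)^((p+2)+(p+1)+1) * ((Nat.choose (p+1) ((p+2)-1-(p+1))):ℚ) * ((p+2).factorial:ℚ) * 4^(p+2) / (((((p+1):ℕ):ℚ)+1) * 2^((p+2)+1))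
          = ((p+1).factorial:ℚ) * 2^(p+1) := by
        rw [show (p+2)-1-(p+1) = 0 from by omega, Nat.choose_zero_right,
            show (p+2)+(p+1)+1 = 2*(p+2) from by omega, pow_mul]
        rw [show ((p+2).factorial:ℚ) = ((p+2:ℕ):ℚ) * ((p+1).factorial:ℚ) from by
              rw [show p+2 = p+1+1 from rfl, Nat.factorial_succ]; push_cast; ring]
        have h4 : (4:ℚ)^(p+2) = 2^(p+2) * 2^(p+2) := by rw [← mul_pow]; norm_num
        rw [h4]
        norm_num
        field_simp
        ring
      rw [htop]
      rw [Finset.sum_sub_distrib, ← Finset.mul_sum] at key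
      linarith [key]

theorem stmt_2 (n : ℕ) : ∃ m : ℤ, a n = (m : ℚ) := by
  refine ⟨∑ i ∈ Finset.range n, (-1:ℤ)^(n+i+1) *
    ((Nat.choose i (n-1-i)) * (n.factorial / (i+1)) * 2^(2*(i+1) - (n+1)) : ℕ), ?_⟩
  rw [a_eq]
  push_cast
  refine Finset.sum_congr rfl fun i hi => ?_
  have hin : i < n := Finset.mem_range.mp hi
  by_cases h : n ≤ 2*i+1
  · have hdvd : (i+1) ∣ n.factorial := Nat.dvd_factorial (by omega) (by omega)
    have hdvd' : ((i:ℤ)+1) ∣ (n.factorial : ℤ) := by exact_mod_cast Int.natCast_dvd_natCast.mpr hdvd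
    have hcast : ((((n.factorial : ℤ)) / ((i:ℤ)+1) : ℤ) : ℚ) = (n.factorial : ℚ) / ((i:ℚ)+1) := by
      rw [Int.cast_div hdvd' (by positivity)]; push_cast; ring
    have hpow : ((2:ℚ))^(2*(i+1) - (n+1)) = 4^(i+1) / 2^(n+1) := by
      rw [eq_div_iff (by positivity), ← pow_add,
          show 2*(i+1) - (n+1) + (n+1) = 2*(i+1) from by omega,
          show (4:ℚ) = 2^2 from by norm_num, ← pow_mul]
    rw [hcast, hpow]
    field_simp
  · have h0 : Nat.choose i (n-1-i) = 0 := Nat.choose_eq_zero_of_lt (by omega)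
    simp [h0]
end

section
/- For any positive integer n, the 2-adic valuation of the rational number ∑_{k=1}^{n} 2^k/k is at least s_2(n), the sum of the binary digits of n. -/
open Finset

lemma val_sum_ge {p : ℕ} [Fact p.Prime] {ι : Type*} (s : Finset ι) (F : ι → ℚ) (c : ℤ)
    (h : ∀ i ∈ s, F i ≠ 0 → c ≤ padicValRat p (F i)) (h0 : (∑ i ∈ s, F i) ≠ 0) :
    c ≤ padicValRat p (∑ i ∈ s, F i) := by
  classical
  induction s using Finset.induction with
  | empty => simp at h0
  | insert _ _ ha ih =>
    rename_i a s
    rw [Finset.sum_insert ha] at h0 ⊢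
    by_cases hFa : F a = 0
    · rw [hFa, zero_add] at h0 ⊢
      exact ih (fun i hi => h i (Finset.mem_insert_of_mem hi)) h0
    · by_cases hS : (∑ i ∈ s, F i) = 0
      · rw [hS, add_zero]
        exact h a (Finset.mem_insert_self a s) hFa
      · refine le_trans (le_min (h a (Finset.mem_insert_self a s) hFa)
          (ih (fun i hi => h i (Finset.mem_insert_of_mem hi)) hS)) ?_
        exact padicValRat.min_le_padicValRat_add h0

lemma two_mul_le_two_pow (m : ℕ) : 2 * m ≤ 2 ^ m := by
  induction m with
  | zero => norm_num
  | succ k ih =>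
    rcases Nat.eq_zero_or_pos k with rfl | hk
    · norm_num
    · have : 2 ≤ 2 ^ k := Nat.one_lt_two_pow_iff.mpr (by omega)
      calc 2 * (k+1) = 2*k + 2 := by ring
      _ ≤ 2^k + 2^k := by omega
      _ = 2^(k+1) := by ring

lemma val_log_le (k : ℕ) (hk : 2 ≤ k) : padicValNat 2 k + Nat.log 2 (k-1) + 1 ≤ k := by
  set a := padicValNat 2 k with ha
  set L := Nat.log 2 (k-1) with hL
  have h2a : 2 ^ a ≤ k := Nat.le_of_dvd (by omega) pow_padicValNat_dvd
  have hLb : 2 ^ L ≤ k - 1 := Nat.pow_log_le_self 2 (by omega)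
  rcases le_or_gt a L with h | h
  · have := two_mul_le_two_pow L; omega
  · have := two_mul_le_two_pow a; omega
lemma s2_le_log (n : ℕ) (hn : 0 < n) : (Nat.digits 2 n).sum ≤ Nat.log 2 n + 1 := by
  have hlen : (Nat.digits 2 n).length = Nat.log 2 n + 1 :=
    Nat.digits_len 2 n (by norm_num) (by omega)
  calc (Nat.digits 2 n).sum ≤ (Nat.digits 2 n).length • 1 :=
        List.sum_le_card_nsmul _ 1 (fun x hx => by
          have := Nat.digits_lt_base (by norm_num) hx; omega)
    _ = Nat.log 2 n + 1 := by simp [hlen]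

lemma s2_plus_val_le (n k : ℕ) (hn : 0 < n) (h : n < k) :
    (Nat.digits 2 n).sum + padicValNat 2 k ≤ k := by
  have h1 := s2_le_log n hn
  have h2 : Nat.log 2 n ≤ Nat.log 2 (k-1) := Nat.log_mono_right (by omega)
  have h3 := val_log_le k (by omega)
  omega

lemma padicValRat_two_two : padicValRat 2 (2:ℚ) = 1 := by
  rw [show ((2:ℚ)) = ((2:ℕ):ℚ) by norm_num]
  exact padicValRat.self one_lt_two

lemma tail_term_val (n k : ℕ) (hn : 0 < n) (h : n < k) :
    ((Nat.digits 2 n).sum : ℤ) ≤ padicValRat 2 ((2:ℚ) ^ k / (k:ℚ)) := by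
  have hk0 : (k:ℚ) ≠ 0 := Nat.cast_ne_zero.mpr (by omega)
  have hv : padicValRat 2 ((2:ℚ) ^ k / (k:ℚ)) = (k : ℤ) - padicValNat 2 k := by
    rw [padicValRat.div (by positivity) hk0, padicValRat.pow 2,
      padicValRat_two_two, padicValRat.of_nat]
    ring
  rw [hv]
  have := s2_plus_val_le n k hn h
  omega
lemma alt_sum_Q (m : ℕ) (hm : 0 < m) :
    ∑ j ∈ range (m+1), ((-1:ℚ))^j * (Nat.choose m j : ℚ) = 0 := by
  have h := Int.alternating_sum_range_choose_of_ne (n := m) (by omega)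
  have : ((∑ i ∈ range (m + 1), (-1:ℤ) ^ i * ↑(m.choose i) : ℤ) : ℚ) = 0 := by
    rw [h]; norm_num
  push_cast at this
  convert this using 2

lemma sum_choose_Q (m : ℕ) :
    ∑ j ∈ range (m+1), (Nat.choose m j : ℚ) = 2 ^ m := by
  have h := Nat.sum_range_choose m
  have : ((∑ i ∈ range (m + 1), m.choose i : ℕ) : ℚ) = ((2^m : ℕ) : ℚ) := by rw [h]
  push_cast at this
  exact this

lemma hA_lemma (n : ℕ) : ∑ i ∈ range (n+1), (Nat.choose n i : ℚ) * (1 - (-1:ℚ)^(i+1)) / ((i:ℚ)+1)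
        = 2 ^ (n+1) / ((n:ℚ)+1) := by
  have hn1 : ((n:ℚ)+1) ≠ 0 := by positivity
  rw [eq_div_iff hn1, Finset.sum_mul]
  have hpt : ∀ i ∈ range (n+1),
      (Nat.choose n i : ℚ) * (1 - (-1:ℚ)^(i+1)) / ((i:ℚ)+1) * ((n:ℚ)+1)
        = (Nat.choose (n+1) (i+1) : ℚ) * (1 - (-1:ℚ)^(i+1)) := by
    intro i _
    have hc : ((n:ℚ)+1) * (Nat.choose n i : ℚ) = (Nat.choose (n+1) (i+1) : ℚ) * ((i:ℚ)+1) := by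
      exact_mod_cast congrArg (Nat.cast : ℕ → ℚ) (Nat.add_one_mul_choose_eq n i)
    have hi1 : ((i:ℚ)+1) ≠ 0 := by positivity
    field_simp
    linear_combination (1 - (-1:ℚ)^(i+1)) * hc
  rw [Finset.sum_congr rfl hpt]
  have hre := Finset.sum_range_succ' (fun j => (Nat.choose (n+1) j : ℚ) * (1 - (-1:ℚ)^j)) (n+1)
  simp only [pow_zero, sub_self, mul_zero, add_zero] at hre
  rw [← hre]
  have : ∀ j ∈ range (n+2), (Nat.choose (n+1) j : ℚ) * (1 - (-1:ℚ)^j)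
      = (Nat.choose (n+1) j : ℚ) - (-1:ℚ)^j * (Nat.choose (n+1) j : ℚ) := by
    intro j _; ring
  rw [Finset.sum_congr rfl this, Finset.sum_sub_distrib,
    sum_choose_Q (n+1), alt_sum_Q (n+1) (by omega)]
  ring

lemma key_id (n : ℕ) :
    ∑ i ∈ range n, (2:ℚ) ^ (i+1) / ((i:ℚ)+1) =
      ∑ i ∈ range n, (Nat.choose n (i+1) : ℚ) * (1 - (-1:ℚ)^(i+1)) / ((i:ℚ)+1) := by
  induction n with
  | zero => simp
  | succ n ih =>
    rw [Finset.sum_range_succ]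
    have hsplit : ∀ i ∈ range (n+1),
        (Nat.choose (n+1) (i+1) : ℚ) * (1 - (-1:ℚ)^(i+1)) / ((i:ℚ)+1) =
        (Nat.choose n i : ℚ) * (1 - (-1:ℚ)^(i+1)) / ((i:ℚ)+1)
          + (Nat.choose n (i+1) : ℚ) * (1 - (-1:ℚ)^(i+1)) / ((i:ℚ)+1) := by
      intro i _
      rw [Nat.choose_succ_succ n i]
      push_cast
      ring
    rw [Finset.sum_congr rfl hsplit, Finset.sum_add_distrib]
    have hB : ∑ i ∈ range (n+1), (Nat.choose n (i+1) : ℚ) * (1 - (-1:ℚ)^(i+1)) / ((i:ℚ)+1)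
        = ∑ i ∈ range n, (Nat.choose n (i+1) : ℚ) * (1 - (-1:ℚ)^(i+1)) / ((i:ℚ)+1) := by
      rw [Finset.sum_range_succ, Nat.choose_succ_self]
      norm_num
    rw [hB, ← ih, hA_lemma n]
    ring
lemma pow_term_val (M i : ℕ) (hi : i < 2^M)
    (h0 : (Nat.choose (2^M) (i+1) : ℚ) * (1 - (-1:ℚ)^(i+1)) / ((i:ℚ)+1) ≠ 0) :
    (M:ℤ) + 1 ≤ padicValRat 2
      ((Nat.choose (2^M) (i+1) : ℚ) * (1 - (-1:ℚ)^(i+1)) / ((i:ℚ)+1)) := by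
  set j := i + 1 with hj
  have hodd : Odd j := by
    rcases Nat.even_or_odd j with he | ho
    · exfalso; apply h0; rw [he.neg_one_pow]; ring
    · exact ho
  have hpow : (1 - (-1:ℚ)^j) = 2 := by rw [hodd.neg_one_pow]; ring
  have hj2 : j ≤ 2^M := by omega
  have hCpos : 0 < Nat.choose (2^M) j := Nat.choose_pos hj2
  have hMpos : 0 < 2^M := pow_pos (by norm_num) M
  have hjodd : ¬ (2 ∣ j) := by rw [Nat.odd_iff] at hodd; omega
  -- valuation of the binomial coefficient
  have hvC : M ≤ padicValNat 2 (Nat.choose (2^M) j) := by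
    obtain ⟨m', hm'⟩ : ∃ m', 2^M = m' + 1 := ⟨2^M - 1, by omega⟩
    have hmul : 2^M * Nat.choose m' i = Nat.choose (2^M) j * j := by
      rw [hm']; exact Nat.add_one_mul_choose_eq m' i
    have hC'pos : 0 < Nat.choose m' i := Nat.choose_pos (by omega)
    have e1 : padicValNat 2 (2^M * Nat.choose m' i)
        = M + padicValNat 2 (Nat.choose m' i) := by
      rw [padicValNat.mul (by positivity) (by omega), padicValNat.prime_pow]
    have e2 : padicValNat 2 (Nat.choose (2^M) j * j)
        = padicValNat 2 (Nat.choose (2^M) j) := by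
      rw [padicValNat.mul (by omega) (by omega), padicValNat.eq_zero_of_not_dvd hjodd,
        add_zero]
    have e3 : padicValNat 2 (2^M * Nat.choose m' i)
        = padicValNat 2 (Nat.choose (2^M) j * j) := by rw [hmul]
    omega
  have hCQ : ((Nat.choose (2^M) j : ℚ)) ≠ 0 := Nat.cast_ne_zero.mpr (by omega)
  have hjQ : ((i:ℚ)+1) ≠ 0 := by positivity
  rw [hpow]
  have hval : padicValRat 2 ((Nat.choose (2^M) j : ℚ) * 2 / ((i:ℚ)+1))
      = (padicValNat 2 (Nat.choose (2^M) j) : ℤ) + 1 - padicValNat 2 j := by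
    rw [padicValRat.div (by exact mul_ne_zero hCQ two_ne_zero) hjQ,
      padicValRat.mul hCQ two_ne_zero, padicValRat_two_two,
      show ((i:ℚ)+1) = ((j:ℕ):ℚ) by push_cast [hj]; ring,
      padicValRat.of_nat, padicValRat.of_nat]
  rw [hval, padicValNat.eq_zero_of_not_dvd hjodd]
  norm_num
  omega

lemma sum_Icc_to_range (m : ℕ) :
    ∑ k ∈ Icc 1 m, ((2:ℚ)^k/(k:ℚ)) = ∑ i ∈ range m, (2:ℚ)^(i+1)/((i:ℚ)+1) := by
  induction m with
  | zero => simp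
  | succ m ih =>
    rw [Finset.sum_Icc_succ_top (by omega), Finset.sum_range_succ, ih]
    push_cast
    ring_nf
open Finset in
theorem stmt_3 (n : ℕ) (hn : 0 < n) :
    padicValRat 2 (∑ k ∈ Finset.Icc 1 n, (2 ^ k / (k : ℚ))) ≥ ((Nat.digits 2 n).sum : ℤ) := by
  have hnN : n < 2^n := Nat.lt_two_pow_self
  have hpos : ∀ m : ℕ, 0 < m → 0 < ∑ k ∈ Icc 1 m, ((2:ℚ)^k/(k:ℚ)) := by
    intro m hm
    apply Finset.sum_pos
    · intro k hk
      have h1 : 1 ≤ k := (Finset.mem_Icc.mp hk).1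
      have h2 : 0 < (k:ℚ) := by exact_mod_cast Nat.lt_of_lt_of_le Nat.zero_lt_one h1
      positivity
    · exact ⟨1, Finset.mem_Icc.mpr ⟨le_refl 1, hm⟩⟩
  have htailpos : 0 < ∑ k ∈ Ioc n (2^n), ((2:ℚ)^k/(k:ℚ)) := by
    apply Finset.sum_pos
    · intro k hk
      have h1 : n < k := (Finset.mem_Ioc.mp hk).1
      have h2 : 0 < (k:ℚ) := by exact_mod_cast Nat.lt_of_lt_of_le hn (by omega)
      positivity
    · exact ⟨2^n, Finset.mem_Ioc.mpr ⟨hnN, le_refl _⟩⟩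
  have hsplit : (∑ k ∈ Icc 1 n, ((2:ℚ)^k/(k:ℚ))) + (∑ k ∈ Ioc n (2^n), ((2:ℚ)^k/(k:ℚ)))
      = ∑ k ∈ Icc 1 (2^n : ℕ), ((2:ℚ)^k/(k:ℚ)) := by
    rw [show (Icc 1 n) = Ioc 0 n from (Finset.Icc_add_one_left_eq_Ioc 0 n),
      show (Icc 1 (2^n : ℕ)) = Ioc 0 (2^n) from (Finset.Icc_add_one_left_eq_Ioc 0 (2^n))]
    exact Finset.sum_Ioc_consecutive _ (Nat.zero_le n) hnN.le
  have hsle : ((Nat.digits 2 n).sum : ℤ) ≤ (n:ℤ) := by exact_mod_cast Nat.digit_sum_le 2 n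
  have hbig : ((Nat.digits 2 n).sum : ℤ)
      ≤ padicValRat 2 (∑ k ∈ Icc 1 (2^n : ℕ), ((2:ℚ)^k/(k:ℚ))) := by
    rw [sum_Icc_to_range (2^n), key_id (2^n)]
    apply val_sum_ge
    · intro i hiR hne
      refine le_trans ?_ (pow_term_val n i (Finset.mem_range.mp hiR) hne)
      linarith [hsle]
    · rw [← key_id (2^n), ← sum_Icc_to_range (2^n)]
      exact (hpos (2^n) (by positivity)).ne'
  have htail : ((Nat.digits 2 n).sum : ℤ)
      ≤ padicValRat 2 (∑ k ∈ Ioc n (2^n), ((2:ℚ)^k/(k:ℚ))) := by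
    apply val_sum_ge
    · intro k hk _
      exact tail_term_val n k hn (Finset.mem_Ioc.mp hk).1
    · exact htailpos.ne'
  rw [ge_iff_le]
  have heq : (∑ k ∈ Icc 1 n, ((2:ℚ)^k/(k:ℚ)))
      = (∑ k ∈ Icc 1 (2^n : ℕ), ((2:ℚ)^k/(k:ℚ)))
        + (-(∑ k ∈ Ioc n (2^n), ((2:ℚ)^k/(k:ℚ)))) := by
    linarith
  rw [heq]
  refine le_trans (le_min hbig ?_) (padicValRat.min_le_padicValRat_add ?_)
  · rw [padicValRat.neg]; exact htail
  · rw [← heq]; exact (hpos n hn).ne'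
end

section
/- For any positive integer n, (n!/2^n) · ∑_{k=1}^{n} 2^k/k is an integer. -/
open Finset

private def Bsum (n : ℕ) : ℕ := ∑ k ∈ Finset.range (n+1), k.factorial * (n - k).factorial

private lemma Bsum_key (n : ℕ) :
    2 * Bsum (n+1) = (n+2) * Bsum n + 2 * (n+1).factorial := by
  have h1 : ∑ k ∈ range (n+1),
      ((k+1).factorial * (n-k).factorial + k.factorial * (n+1-k).factorial)
      = (n+2) * Bsum n := by
    rw [Bsum, mul_sum]
    refine sum_congr rfl fun k hk => ?_
    have hk' : k ≤ n := Nat.lt_succ_iff.mp (mem_range.mp hk)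
    have h : n + 1 - k = (n - k) + 1 := by omega
    rw [h, Nat.factorial_succ, Nat.factorial_succ]
    have hc : (n + 2) = (k+1) + (n-k+1) := by omega
    rw [hc]; ring
  have h2 : Bsum (n+1) = (∑ k ∈ range (n+1), (k+1).factorial * (n-k).factorial)
      + (n+1).factorial := by
    rw [Bsum, Finset.sum_range_succ']
    simp [Nat.succ_sub_succ]
  have h3 : Bsum (n+1) = (∑ k ∈ range (n+1), k.factorial * (n+1-k).factorial)
      + (n+1).factorial := by
    rw [Bsum, Finset.sum_range_succ]
    simp
  rw [Finset.sum_add_distrib] at h1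
  omega

private lemma main_id (n : ℕ) :
    (((n+1).factorial : ℚ) / 2 ^ (n+1)) * ∑ k ∈ Finset.Icc 1 (n+1), (2 ^ k / (k : ℚ))
      = (Bsum n : ℚ) := by
  induction n with
  | zero => norm_num [Bsum]
  | succ n ih =>
    have hsum' := Finset.sum_Icc_succ_top (a := 1) (b := n+1) (by omega)
      (fun k => (2:ℚ) ^ k / (k : ℚ))
    have hsum : ∑ k ∈ Finset.Icc 1 (n+2), (2 ^ k / (k : ℚ))
        = (∑ k ∈ Finset.Icc 1 (n+1), (2 ^ k / (k : ℚ))) + 2 ^ (n+2) / ((n:ℚ)+2) := by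
      rw [show n+2 = n+1+1 from rfl, hsum']
      push_cast; ring
    have hkey : (Bsum (n+1) : ℚ) = (((n:ℚ)+2) * Bsum n + 2 * (n+1).factorial) / 2 := by
      have h := Bsum_key n
      have h2 : ((2 * Bsum (n+1) : ℕ) : ℚ) = (((n+2) * Bsum n + 2*(n+1).factorial : ℕ) : ℚ) := by
        rw [h]
      push_cast at h2
      field_simp
      linarith
    rw [hsum, hkey, ← ih]
    have hfac : ((n+2).factorial : ℚ) = ((n:ℚ)+2) * (n+1).factorial := by
      push_cast [Nat.factorial_succ]; ring
    have h2 : ((n:ℚ)+2) ≠ 0 := by positivity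
    have hp : (2:ℚ) ^ (n+1) ≠ 0 := by positivity
    rw [hfac]
    field_simp
    ring

open Finset in
theorem stmt_4 (n : ℕ) (hn : 0 < n) :
    ∃ m : ℤ, ((Nat.factorial n : ℚ) / 2 ^ n) * ∑ k ∈ Finset.Icc 1 n, (2 ^ k / (k : ℚ)) = (m : ℚ) := by
  obtain ⟨n, rfl⟩ := Nat.exists_eq_add_of_lt hn
  refine ⟨Bsum n, ?_⟩
  rw [zero_add]
  push_cast [main_id n]

  rfl
end

section
/- The exponential generating function of the sequence (a_n) equals -2·log(1-x)/(2-x); that is, as formal power series, ∑_{n≥0} a_n x^n/n! = (-2·log(1-x))/(2-x), equivalently (2-x)·∑_{n≥0} a_n x^n/n! = -2·∑_{k≥1} x^k/k. -/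
open PowerSeries in
theorem stmt_9 :
    (2 - PowerSeries.X) * (PowerSeries.mk fun n => a n / (Nat.factorial n : ℚ)) =
      2 * PowerSeries.mk (fun k => if k = 0 then 0 else 1 / (k : ℚ)) := by
  have h2 : (2 : ℚ⟦X⟧) = PowerSeries.C (2 : ℚ) := by rw [map_ofNat]
  rw [h2]
  ext n
  rw [sub_mul, map_sub, PowerSeries.coeff_C_mul, PowerSeries.coeff_C_mul]
  cases n with
  | zero =>
    simp [a]
  | succ n =>
    rw [PowerSeries.coeff_succ_X_mul]
    simp only [PowerSeries.coeff_mk, Nat.succ_ne_zero, if_false]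
    show 2 * (a (n+1) / ((n+1).factorial : ℚ)) - a n / (n.factorial : ℚ) = 2 * (1 / ((n+1 : ℕ) : ℚ))
    have hf : ((n+1).factorial : ℚ) = ((n+1 : ℕ) : ℚ) * (n.factorial : ℚ) := by
      rw [Nat.factorial_succ]; push_cast; ring
    have hn : ((n+1 : ℕ) : ℚ) ≠ 0 := by positivity
    have hfn : ((n.factorial : ℚ)) ≠ 0 := by positivity
    rw [show a (n+1) = ((n + 1 : ℕ) : ℚ) / 2 * a n + (Nat.factorial n : ℚ) from rfl, hf]
    field_simp
    ring
end

section
/- The sequence a_n = (n!/2^n)·∑_{k=1}^{n} 2^k/k satisfies a_n ~ 2·(n-1)! as n → ∞, i.e., lim_{n→∞} a_n/(2·(n-1)!) = 1. -/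
open Finset Filter

noncomputable def Saux (n : ℕ) : ℝ := ∑ k ∈ Finset.Icc 1 n, (2 ^ k / (k : ℝ))

lemma Saux_succ (n : ℕ) : Saux (n+1) = Saux n + 2^(n+1)/((n:ℝ)+1) := by
  unfold Saux
  rw [Finset.sum_Icc_succ_top (by omega)]
  push_cast; ring

lemma key : ∀ n : ℕ, 5 ≤ n → |(n : ℝ) * Saux n / 2^(n+1) - 1| ≤ 4 / n := by
  intro n hn
  induction n, hn using Nat.le_induction with
  | base =>
      have h5 : Saux 5 = 256/15 := by
        show Saux (4+1) = _
        rw [Saux_succ, show (4:ℕ) = 3+1 from rfl, Saux_succ,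
          show (3:ℕ) = 2+1 from rfl, Saux_succ, show (2:ℕ) = 1+1 from rfl, Saux_succ,
          show Saux 1 = 2 by norm_num [Saux]]
        norm_num
      rw [h5, abs_sub_le_iff]
      norm_num
  | succ n hn ih =>
      have hn0 : (0:ℝ) < n := by positivity
      have hn5 : (5:ℝ) ≤ n := by exact_mod_cast hn
      have hp : (0:ℝ) < 2^(n+1) := by positivity
      have hid : ((n:ℝ)+1) * Saux (n+1) / 2^(n+1+1) - 1
          = (((n:ℝ)+1)/(2*n)) * ((n:ℝ) * Saux n / 2^(n+1) - 1) + 1/(2*n) := by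
        rw [Saux_succ]
        field_simp
        ring
      have habs : |((n:ℝ)+1) * Saux (n+1) / 2^(n+1+1) - 1|
          ≤ (((n:ℝ)+1)/(2*n)) * (4/n) + 1/(2*n) := by
        rw [hid]
        calc |(((n:ℝ)+1)/(2*(n:ℝ))) * ((n:ℝ) * Saux n / 2^(n+1) - 1) + 1/(2*(n:ℝ))|
            ≤ |(((n:ℝ)+1)/(2*(n:ℝ))) * ((n:ℝ) * Saux n / 2^(n+1) - 1)| + |1/(2*(n:ℝ))| := abs_add_le _ _
          _ ≤ (((n:ℝ)+1)/(2*n)) * (4/n) + 1/(2*n) := by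
              rw [abs_mul, abs_of_nonneg (by positivity : (0:ℝ) ≤ ((n:ℝ)+1)/(2*(n:ℝ))),
                abs_of_nonneg (by positivity : (0:ℝ) ≤ 1/(2*(n:ℝ)))]
              gcongr
      have hfinal : (((n:ℝ)+1)/(2*n)) * (4/n) + 1/(2*n) ≤ 4/((n:ℝ)+1) := by
        rw [div_mul_div_comm, div_add_div _ _ (by positivity) (by positivity),
          div_le_div_iff₀ (by positivity) (by positivity)]
        nlinarith [sq_nonneg ((n:ℝ) - 5)]
      have : |((n:ℝ)+1) * Saux (n+1) / 2^(n+1+1) - 1| ≤ 4/((n:ℝ)+1) :=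
        habs.trans hfinal
      push_cast
      convert this using 2 <;> push_cast <;> ring

open Finset Filter in
theorem stmt_10 :
    Filter.Tendsto
      (fun n : ℕ =>
        (((Nat.factorial n : ℝ) / 2 ^ n) * ∑ k ∈ Finset.Icc 1 n, (2 ^ k / (k : ℝ))) /
          (2 * (Nat.factorial (n - 1) : ℝ)))
      Filter.atTop (nhds 1) := by
  have h0 : Tendsto (fun n : ℕ => (n:ℝ) * Saux n / 2^(n+1) - 1) atTop (nhds 0) := by
    refine squeeze_zero_norm' ?_ (tendsto_const_div_atTop_nhds_zero_nat 4)
    filter_upwards [eventually_ge_atTop 5] with n hn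
    simpa [Real.norm_eq_abs] using key n hn
  have h1 : Tendsto (fun n : ℕ => (n:ℝ) * Saux n / 2^(n+1)) atTop (nhds 1) := by
    have := h0.add (tendsto_const_nhds (x := (1:ℝ)))
    simpa using this
  apply h1.congr'
  filter_upwards [eventually_ge_atTop 1] with n hn
  obtain ⟨m, rfl⟩ := Nat.exists_eq_add_of_le hn
  have hm : (1 + m) - 1 = m := by omega
  have hfac : (Nat.factorial (1+m) : ℝ) = (m+1) * (Nat.factorial m : ℝ) := by
    rw [Nat.add_comm, Nat.factorial_succ]; push_cast; ring
  have hne : (Nat.factorial m : ℝ) ≠ 0 := by positivity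
  rw [hm, hfac]
  unfold Saux
  push_cast
  field_simp
  ring
end

section
/- The sequence ∑_{k=1}^{n} 2^k/k is asymptotically equivalent to 2^{n+1}/n as n → ∞; that is, lim_{n→∞} (n/2^{n+1})·∑_{k=1}^{n} 2^k/k = 1. -/
open Finset Filter Topology

noncomputable def ff (n j : ℕ) : ℝ :=
  if j < n then (n : ℝ) / (((n - j : ℕ) : ℝ) * 2 ^ (j + 1)) else 0

lemma tsum_ff (n : ℕ) :
    ∑' j, ff n j = ((n : ℝ) / 2 ^ (n + 1)) * ∑ k ∈ Finset.Icc 1 n, (2 ^ k / (k : ℝ)) := by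
  rw [tsum_eq_sum (s := Finset.range n)
    (by intro j hj; simp only [Finset.mem_range, not_lt] at hj; simp [ff]; omega),
    Finset.mul_sum]
  refine Finset.sum_nbij' (i := fun j => n - j) (j := fun k => n - k) ?_ ?_ ?_ ?_ ?_
  · intro j hj; simp only [Finset.mem_range] at hj; simp [Finset.mem_Icc]; omega
  · intro k hk; simp only [Finset.mem_Icc] at hk; simp [Finset.mem_range]; omega
  · intro j hj; simp only [Finset.mem_range] at hj; omega
  · intro k hk; simp only [Finset.mem_Icc] at hk; omega
  · intro j hj
    simp only [Finset.mem_range] at hj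
    rw [ff, if_pos hj]
    have h2 : (2:ℝ) ^ (n + 1) = 2 ^ (j + 1) * 2 ^ (n - j) := by
      rw [← pow_add]; congr 1; omega
    have h3 : ((n - j : ℕ) : ℝ) ≠ 0 := by
      simp; omega
    rw [h2]
    field_simp

lemma ff_tendsto (j : ℕ) :
    Tendsto (fun n => ff n j) atTop (𝓝 ((2:ℝ)⁻¹ ^ (j + 1))) := by
  have h0 : Tendsto (fun m : ℕ => (j:ℝ) / m) atTop (𝓝 0) :=
    tendsto_const_div_atTop_nhds_zero_nat (j:ℝ)
  have h1 : Tendsto (fun n : ℕ => (j:ℝ) / ((n - j : ℕ) : ℝ)) atTop (𝓝 0) :=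
    h0.comp (tendsto_sub_atTop_nat j)
  have h2 : Tendsto (fun n : ℕ => (n:ℝ) / ((n - j : ℕ) : ℝ)) atTop (𝓝 1) := by
    have := h1.const_add 1
    rw [add_zero] at this
    refine this.congr' ?_
    filter_upwards [eventually_ge_atTop (j + 1)] with n hn
    have hnj : ((n - j : ℕ) : ℝ) ≠ 0 := by simp; omega
    have hcast : ((n - j : ℕ) : ℝ) = (n : ℝ) - j := by
      push_cast [Nat.cast_sub (by omega : j ≤ n)]; ring
    field_simp
    rw [hcast]; ring
  have h3 := h2.mul_const ((2:ℝ)⁻¹ ^ (j + 1))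
  rw [one_mul] at h3
  refine h3.congr' ?_
  filter_upwards [eventually_ge_atTop (j + 1)] with n hn
  rw [ff, if_pos (by omega), inv_pow]
  ring

lemma ff_bound (n j : ℕ) : |ff n j| ≤ ((j:ℝ) + 1) * (2:ℝ)⁻¹ ^ (j + 1) := by
  have hb : (0:ℝ) ≤ ((j:ℝ) + 1) * (2:ℝ)⁻¹ ^ (j + 1) := by positivity
  rw [ff]
  split_ifs with h
  · have hnj : (0:ℝ) < ((n - j : ℕ) : ℝ) := by simp; omega
    rw [abs_of_nonneg (by positivity)]
    rw [inv_pow, div_mul_eq_div_div, ← div_eq_mul_inv]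
    gcongr
    rw [div_le_iff₀ hnj]
    have : (n : ℝ) ≤ ((j:ℝ) + 1) * ((n - j : ℕ) : ℝ) := by
      have hN : n ≤ (j + 1) * (n - j) := by
        have h1 : 1 ≤ n - j := by omega
        calc n = j + (n - j) := by omega
        _ ≤ j * (n - j) + (n - j) := by nlinarith
        _ = (j + 1) * (n - j) := by ring
      exact_mod_cast hN
    linarith
  · simpa using hb

lemma bound_summable : Summable (fun j : ℕ => ((j:ℝ) + 1) * (2:ℝ)⁻¹ ^ (j + 1)) := by
  have h1 : Summable (fun j : ℕ => (j:ℝ) * (2:ℝ)⁻¹ ^ j) := by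
    simpa using summable_pow_mul_geometric_of_norm_lt_one 1
      (by norm_num : ‖(2:ℝ)⁻¹‖ < 1)
  have h2 : Summable (fun j : ℕ => (2:ℝ)⁻¹ ^ j) :=
    summable_geometric_of_lt_one (by norm_num) (by norm_num)
  have := ((h1.add h2).mul_left (2:ℝ)⁻¹)
  refine this.congr fun j => ?_
  rw [pow_succ]
  ring

open Finset Filter in
theorem stmt_11 :
    Filter.Tendsto
      (fun n : ℕ => ((n : ℝ) / 2 ^ (n + 1)) * ∑ k ∈ Finset.Icc 1 n, (2 ^ k / (k : ℝ)))
      Filter.atTop (nhds 1) := by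
  have h := tendsto_tsum_of_dominated_convergence (f := ff)
    (g := fun j => (2:ℝ)⁻¹ ^ (j + 1))
    (bound := fun j => ((j:ℝ) + 1) * (2:ℝ)⁻¹ ^ (j + 1))
    bound_summable ff_tendsto (Eventually.of_forall fun n j => by
      simpa using ff_bound n j)
  have hg : ∑' j : ℕ, (2:ℝ)⁻¹ ^ (j + 1) = 1 := by
    have : (fun j : ℕ => (2:ℝ)⁻¹ ^ (j + 1)) = fun j : ℕ => (2:ℝ)⁻¹ ^ j * 2⁻¹ := by
      funext j; rw [pow_succ]
    rw [this, tsum_mul_right, tsum_geometric_of_lt_one (by norm_num) (by norm_num)]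
    norm_num
  rw [hg] at h
  refine h.congr fun n => tsum_ff n
end

section
/- For every positive integer ℓ, the Genocchi number G_{2ℓ} has sign (-1)^ℓ, i.e., (-1)^ℓ · G_{2ℓ} > 0. -/
open PowerSeries in
lemma genocchi_series_eq :
    2 * PowerSeries.X * (PowerSeries.exp ℚ + 1)⁻¹ =
      2 * bernoulliPowerSeries ℚ - 2 * rescale (2 : ℚ) (bernoulliPowerSeries ℚ) := by
  symm
  rw [show (2 : ℚ⟦X⟧) * X * (exp ℚ + 1)⁻¹ = (2 * X) * (exp ℚ + 1)⁻¹ by ring]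
  rw [PowerSeries.eq_mul_inv_iff_mul_eq (by simp)]
  have hexp1 : (exp ℚ - 1 : ℚ⟦X⟧) ≠ 0 := by
    intro h
    have := congrArg (coeff (R := ℚ) 1) h
    simp [coeff_exp] at this
  apply mul_right_cancel₀ hexp1
  have hB : bernoulliPowerSeries ℚ * (exp ℚ - 1) = X :=
    bernoulliPowerSeries_mul_exp_sub_one ℚ
  have hB2 : rescale (2 : ℚ) (bernoulliPowerSeries ℚ) * (exp ℚ * exp ℚ - 1) = 2 * X := by
    have := congrArg (rescale (2 : ℚ)) hB
    rw [map_mul, map_sub, map_one, rescale_X] at this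
    have hsq : rescale (2 : ℚ) (exp ℚ) = exp ℚ * exp ℚ := by
      have := (PowerSeries.exp_pow_eq_rescale_exp (A := ℚ) 2).symm
      simpa [pow_two] using this
    rw [hsq] at this
    rw [this, show (PowerSeries.C (R := ℚ)) 2 = 2 from map_ofNat _ 2]
  linear_combination (2 * (exp ℚ + 1)) * hB - 2 * hB2

lemma genocchi_eq_bernoulli (n : ℕ) :
    genocchi n = 2 * (1 - 2 ^ n) * bernoulli n := by
  have hfac : (Nat.factorial n : ℚ) ≠ 0 := by
    exact_mod_cast Nat.factorial_ne_zero n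
  have h2 : (PowerSeries.coeff (R := ℚ) n) (2 * bernoulliPowerSeries ℚ)
      = 2 * (bernoulli n / (Nat.factorial n : ℚ)) := by
    rw [two_mul, map_add, bernoulliPowerSeries, PowerSeries.coeff_mk]
    simp only [eq_ratCast, Rat.cast_eq_id, id_eq]
    ring
  have h3 : (PowerSeries.coeff (R := ℚ) n) (2 * PowerSeries.rescale (2:ℚ) (bernoulliPowerSeries ℚ)) =
      2 * (2 ^ n * (bernoulli n / (Nat.factorial n : ℚ))) := by
    rw [two_mul, map_add, PowerSeries.coeff_rescale, bernoulliPowerSeries,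
      PowerSeries.coeff_mk]
    simp only [eq_ratCast, Rat.cast_eq_id, id_eq]
    ring
  rw [genocchi, genocchi_series_eq, map_sub, h2, h3]
  field_simp

lemma bernoulli_sign (k : ℕ) (hk : k ≠ 0) :
    0 < (-1 : ℚ) ^ (k + 1) * bernoulli (2 * k) := by
  have hs := hasSum_zeta_nat hk
  have hpos : 0 < ((-1 : ℝ) ^ (k + 1) * (2 : ℝ) ^ (2 * k - 1) * Real.pi ^ (2 * k) *
      bernoulli (2 * k) / (Nat.factorial (2*k) : ℝ)) := by
    rw [← hs.tsum_eq]
    refine Summable.tsum_pos hs.summable (fun i => by positivity) 1 ?_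
    norm_num
  have hfac : (0 : ℝ) < (Nat.factorial (2*k) : ℝ) := by exact_mod_cast Nat.factorial_pos _
  have hpi : (0 : ℝ) < (2 : ℝ) ^ (2 * k - 1) * Real.pi ^ (2 * k) := by positivity
  have : 0 < (-1 : ℝ) ^ (k + 1) * (bernoulli (2 * k) : ℝ) := by
    by_contra h
    push_neg at h
    have : ((-1 : ℝ) ^ (k + 1) * (2 : ℝ) ^ (2 * k - 1) * Real.pi ^ (2 * k) *
        bernoulli (2 * k) / (Nat.factorial (2*k) : ℝ)) ≤ 0 := by
      apply div_nonpos_of_nonpos_of_nonneg _ hfac.le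
      calc (-1 : ℝ) ^ (k + 1) * (2 : ℝ) ^ (2 * k - 1) * Real.pi ^ (2 * k) * bernoulli (2 * k)
          = ((2 : ℝ) ^ (2 * k - 1) * Real.pi ^ (2 * k)) * ((-1 : ℝ) ^ (k + 1) * bernoulli (2 * k)) := by
            ring
        _ ≤ 0 := mul_nonpos_of_nonneg_of_nonpos hpi.le h
    linarith
  exact_mod_cast this

theorem stmt_16 (ℓ : ℕ) (hℓ : 1 ≤ ℓ) : (-1 : ℚ) ^ ℓ * genocchi (2 * ℓ) > 0 := by
  have hb := bernoulli_sign ℓ (by omega)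
  have h2 : (1 : ℚ) < 2 ^ (2 * ℓ) := by
    have : (2 : ℚ) ^ 1 ≤ 2 ^ (2 * ℓ) := by
      apply pow_le_pow_right₀ (by norm_num) (by omega)
    linarith
  rw [genocchi_eq_bernoulli]
  have key : (-1 : ℚ) ^ ℓ * (2 * (1 - 2 ^ (2 * ℓ)) * bernoulli (2 * ℓ))
      = (2 * (2 ^ (2 * ℓ) - 1)) * ((-1 : ℚ) ^ (ℓ + 1) * bernoulli (2 * ℓ)) := by
    rw [pow_succ]; ring
  rw [key]
  exact mul_pos (by linarith) hb
end
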